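/- Let h be a positive integer, p a prime dividing h, and let (d;a) be an h-regular pair. Then the pair (d^p; a^p), obtained by dividing by p every entry of d and a divisible by p, is (h/p)-regular, and the pair (d(p)/p ; a(p)/p) of quotients by p of the entries divisible by p is also (h/p)-regular. -/

import Mathlib

open Finset

def HRegular (h : ℕ) {c n : ℕ} (d : Fin c → ℕ) (a : Fin n → ℕ) : Prop :=
  ∀ m : ℕ, 1 < m →
    (univ.filter fun i => m ∣ a i).card ≤
      (univ.filter fun j => m ∣ d j).card + (if m ∣ h then 1 else 0)

lemma aux_dvd_div {p m x : ℕ} (hpx : p ∣ x) : m ∣ x / p ↔ p * m ∣ x :=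
  Nat.dvd_div_iff_mul_dvd hpx

theorem stmt13 {c n : ℕ} (h p : ℕ) (hh : 0 < h) (hp : p.Prime) (hph : p ∣ h)
    (d : Fin c → ℕ) (a : Fin (n + 1) → ℕ)
    (hd : ∀ j, 0 < d j) (ha : ∀ i, 0 < a i)
    (hreg : HRegular h d a) :
    HRegular (h / p) (fun j => if p ∣ d j then d j / p else d j)
      (fun i => if p ∣ a i then a i / p else a i) ∧
    (∀ m : ℕ, 1 < m →
      (univ.filter fun i => p ∣ a i ∧ m ∣ a i / p).card ≤
        (univ.filter fun j => p ∣ d j ∧ m ∣ d j / p).card +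
          (if m ∣ h / p then 1 else 0)) := by
  have key : ∀ x : ℕ, ∀ m : ℕ, (p ∣ x ∧ m ∣ x / p) ↔ p * m ∣ x := by
    intro x m
    constructor
    · rintro ⟨hpx, hmx⟩
      exact (aux_dvd_div hpx).mp hmx
    · intro hx
      have hpx : p ∣ x := (dvd_mul_right p m).trans hx
      exact ⟨hpx, (aux_dvd_div hpx).mpr hx⟩
  have hind : ∀ m : ℕ, (p * m ∣ h ↔ m ∣ h / p) := fun m => (aux_dvd_div hph).symm
  have hpm1 : ∀ m : ℕ, 1 < m → 1 < p * m := by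
    intro m hm
    calc 1 < m := hm
    _ ≤ p * m := Nat.le_mul_of_pos_left m hp.pos
  constructor
  · intro m hm
    by_cases hpm : p ∣ m
    · have e1 : ∀ x : ℕ, (m ∣ (if p ∣ x then x / p else x)) ↔ p * m ∣ x := by
        intro x
        by_cases hpx : p ∣ x
        · simp only [hpx, if_true]
          exact aux_dvd_div hpx
        · simp only [hpx, if_false]
          constructor
          · intro hmx
            exact absurd (hpm.trans hmx) hpx
          · intro hx
            exact absurd ((dvd_mul_right p m).trans hx) hpx
      have ea : (univ.filter fun i => m ∣ (if p ∣ a i then a i / p else a i)) =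
          univ.filter fun i => p * m ∣ a i :=
        filter_congr fun i _ => by rw [e1]
      have ed : (univ.filter fun j => m ∣ (if p ∣ d j then d j / p else d j)) =
          univ.filter fun j => p * m ∣ d j :=
        filter_congr fun j _ => by rw [e1]
      simp only [ea, ed, ← hind m]
      exact hreg (p * m) (hpm1 m hm)
    · have cop : Nat.Coprime m p := (hp.coprime_iff_not_dvd.mpr hpm).symm
      have e2 : ∀ x : ℕ, (m ∣ (if p ∣ x then x / p else x)) ↔ m ∣ x := by
        intro x
        by_cases hpx : p ∣ x
        · simp only [hpx, if_true]
          constructor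
          · intro hmx
            exact hmx.trans (Nat.div_dvd_of_dvd hpx)
          · intro hmx
            refine cop.dvd_of_dvd_mul_right ?_
            rwa [Nat.div_mul_cancel hpx]
        · simp [hpx]
      have ea : (univ.filter fun i => m ∣ (if p ∣ a i then a i / p else a i)) =
          univ.filter fun i => m ∣ a i :=
        filter_congr fun i _ => by rw [e2]
      have ed : (univ.filter fun j => m ∣ (if p ∣ d j then d j / p else d j)) =
          univ.filter fun j => m ∣ d j :=
        filter_congr fun j _ => by rw [e2]
      have eh : (m ∣ h / p) ↔ m ∣ h := by
        constructor
        · intro hmh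
          exact hmh.trans (Nat.div_dvd_of_dvd hph)
        · intro hmh
          refine cop.dvd_of_dvd_mul_right ?_
          rwa [Nat.div_mul_cancel hph]
      simp only [ea, ed, eh]
      exact hreg m hm
  · intro m hm
    have ea : (univ.filter fun i => p ∣ a i ∧ m ∣ a i / p) =
        univ.filter fun i => p * m ∣ a i :=
      filter_congr fun i _ => by rw [key]
    have ed : (univ.filter fun j => p ∣ d j ∧ m ∣ d j / p) =
        univ.filter fun j => p * m ∣ d j :=
      filter_congr fun j _ => by rw [key]
    simp only [ea, ed, ← hind m]
    exact hreg (p * m) (hpm1 m hm)
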